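/- (Lemma 6.3) Let π, π′ be plane partitions, s ≥ 1 an integer, and β_1, β_2, β_3 nonzero complex numbers; write β^μ := β_1^{μ_1}β_2^{μ_2}β_3^{μ_3} for μ ∈ ℤ³, and write V(π,π′) = Σ_μ c_μ t^μ, V(π′,π) = Σ_μ d_μ t^μ. For real L > 0 define f(L) := Π_{μ∈ℤ³} (L^{s/2}β^μ − L^{−s/2}β^{−μ})^{−c_μ} · Π_{μ∈ℤ³} (L^{−s/2}β^μ − L^{s/2}β^{−μ})^{−d_μ} (a finite product with integer exponents; for all sufficiently large L every factor is nonzero, so f is eventually well defined). Then f(L) tends to (−β_1β_2β_3)^{|π′|−|π|} as L → +∞. -/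

import Mathlib

open Finset

/-- A plane partition: a finite, downward-closed subset of ℕ³. -/
def IsPlanePartition (π : Finset (ℕ × ℕ × ℕ)) : Prop :=
  ∀ p ∈ π, ∀ q : ℕ × ℕ × ℕ, q.1 ≤ p.1 → q.2.1 ≤ p.2.1 → q.2.2 ≤ p.2.2 → q ∈ π

/-- `Q_π = Σ_{(a,b,c) ∈ π} t₁^a t₂^b t₃^c` in the Laurent polynomial ring
`ℤ[t₁^{±1}, t₂^{±1}, t₃^{±1}]`. -/
noncomputable def Qpoly (π : Finset (ℕ × ℕ × ℕ)) : AddMonoidAlgebra ℤ (ℤ × ℤ × ℤ) :=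
  ∑ p ∈ π, AddMonoidAlgebra.single ((p.1 : ℤ), (p.2.1 : ℤ), (p.2.2 : ℤ)) 1

/-- The image of `Q_π` under the bar involution `tᵢ ↦ tᵢ⁻¹`. -/
noncomputable def Qbar (π : Finset (ℕ × ℕ × ℕ)) : AddMonoidAlgebra ℤ (ℤ × ℤ × ℤ) :=
  ∑ p ∈ π, AddMonoidAlgebra.single (-(p.1 : ℤ), -(p.2.1 : ℤ), -(p.2.2 : ℤ)) 1

/-- The vertex term
`V(π,π') = Q_{π'} − 𝔱⁻¹·(Q_π bar) + 𝔱⁻¹(1−t₁)(1−t₂)(1−t₃)·Q_{π'}·(Q_π bar)`,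
where `𝔱 = t₁t₂t₃`. -/
noncomputable def vertexTerm (π π' : Finset (ℕ × ℕ × ℕ)) : AddMonoidAlgebra ℤ (ℤ × ℤ × ℤ) :=
  Qpoly π' - AddMonoidAlgebra.single (-1, -1, -1) 1 * Qbar π +
    AddMonoidAlgebra.single (-1, -1, -1) 1 *
      ((1 - AddMonoidAlgebra.single (1, 0, 0) 1) * (1 - AddMonoidAlgebra.single (0, 1, 0) 1) *
        (1 - AddMonoidAlgebra.single (0, 0, 1) 1)) * Qpoly π' * Qbar π

/-- The coefficient `c_μ(π,π')` of `t^μ` in `V(π,π')`. -/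
noncomputable def vc (π π' : Finset (ℕ × ℕ × ℕ)) (μ : ℤ × ℤ × ℤ) : ℤ :=
  (vertexTerm π π').coeff μ

/-- `β^μ = β₁^{μ₁} β₂^{μ₂} β₃^{μ₃}` for `μ ∈ ℤ³`. -/
noncomputable def betaPow (β : Fin 3 → ℂ) (μ : ℤ × ℤ × ℤ) : ℂ :=
  β 0 ^ μ.1 * β 1 ^ μ.2.1 * β 2 ^ μ.2.2

/-! ### Auxiliary algebraic machinery -/

/-- Augmentation: the sum of the coefficients. -/
noncomputable def eps : AddMonoidAlgebra ℤ (ℤ × ℤ × ℤ) →+ ℤ :=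
  (Finsupp.liftAddHom fun _ => AddMonoidHom.id ℤ).comp
    AddMonoidAlgebra.coeffAddEquiv.toAddMonoidHom

/-- Weighted sum of the coefficients, `single μ c ↦ c * w μ`. -/
noncomputable def Dw (w : (ℤ × ℤ × ℤ) →+ ℤ) : AddMonoidAlgebra ℤ (ℤ × ℤ × ℤ) →+ ℤ :=
  (Finsupp.liftAddHom fun μ => AddMonoidHom.mulRight (w μ)).comp
    AddMonoidAlgebra.coeffAddEquiv.toAddMonoidHom

@[simp] lemma eps_single (μ : ℤ × ℤ × ℤ) (c : ℤ) :
    eps (AddMonoidAlgebra.single μ c) = c :=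
  Finsupp.liftAddHom_apply_single _ _ _

@[simp] lemma Dw_single (w : (ℤ × ℤ × ℤ) →+ ℤ) (μ : ℤ × ℤ × ℤ) (c : ℤ) :
    Dw w (AddMonoidAlgebra.single μ c) = c * w μ :=
  Finsupp.liftAddHom_apply_single _ _ _

@[simp] lemma eps_one : eps 1 = 1 := by
  rw [AddMonoidAlgebra.one_def]; simp

lemma eps_mul (f g : AddMonoidAlgebra ℤ (ℤ × ℤ × ℤ)) : eps (f * g) = eps f * eps g := by
  induction f using AddMonoidAlgebra.induction_linear with
  | zero => simp
  | add f₁ f₂ h₁ h₂ => rw [add_mul, map_add, map_add, h₁, h₂]; ring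
  | single μ a =>
    induction g using AddMonoidAlgebra.induction_linear with
    | zero => simp
    | add g₁ g₂ h₁ h₂ => rw [mul_add, map_add, map_add, h₁, h₂]; ring
    | single ν b =>
      rw [AddMonoidAlgebra.single_mul_single, eps_single, eps_single, eps_single]

lemma Dw_mul (w : (ℤ × ℤ × ℤ) →+ ℤ) (f g : AddMonoidAlgebra ℤ (ℤ × ℤ × ℤ)) :
    Dw w (f * g) = Dw w f * eps g + eps f * Dw w g := by
  induction f using AddMonoidAlgebra.induction_linear with
  | zero => simp
  | add f₁ f₂ h₁ h₂ => rw [add_mul, map_add, map_add, map_add, h₁, h₂]; ring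
  | single μ a =>
    induction g using AddMonoidAlgebra.induction_linear with
    | zero => simp
    | add g₁ g₂ h₁ h₂ => rw [mul_add, map_add, map_add, map_add, h₁, h₂]; ring
    | single ν b =>
      rw [AddMonoidAlgebra.single_mul_single, Dw_single, Dw_single, Dw_single,
        eps_single, eps_single, map_add]
      ring

/-- The natural embedding of `ℕ³` into `ℤ³`. -/
def emb (p : ℕ × ℕ × ℕ) : ℤ × ℤ × ℤ := ((p.1 : ℤ), (p.2.1 : ℤ), (p.2.2 : ℤ))

@[simp] lemma eps_Qpoly (π : Finset (ℕ × ℕ × ℕ)) : eps (Qpoly π) = π.card := by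
  simp [Qpoly, map_sum]

@[simp] lemma eps_Qbar (π : Finset (ℕ × ℕ × ℕ)) : eps (Qbar π) = π.card := by
  simp [Qbar, map_sum]

lemma Dw_Qpoly (w : (ℤ × ℤ × ℤ) →+ ℤ) (π : Finset (ℕ × ℕ × ℕ)) :
    Dw w (Qpoly π) = ∑ p ∈ π, w (emb p) := by
  simp [Qpoly, map_sum, emb]

lemma Dw_Qbar (w : (ℤ × ℤ × ℤ) →+ ℤ) (π : Finset (ℕ × ℕ × ℕ)) :
    Dw w (Qbar π) = -∑ p ∈ π, w (emb p) := by
  have : ∀ p : ℕ × ℕ × ℕ, (-(p.1 : ℤ), -(p.2.1 : ℤ), -(p.2.2 : ℤ)) = -(emb p) := by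
    intro p; simp [emb, Prod.neg_mk]
  simp only [Qbar, map_sum, Dw_single, this, map_neg, one_mul]
  rw [← Finset.sum_neg_distrib]

lemma eps_vertexTerm (π π' : Finset (ℕ × ℕ × ℕ)) :
    eps (vertexTerm π π') = (π'.card : ℤ) - π.card := by
  rw [vertexTerm, map_add, map_sub, eps_mul, eps_mul, eps_mul, eps_mul, eps_mul]
  simp [map_sub]

lemma Dw_vertexTerm (w : (ℤ × ℤ × ℤ) →+ ℤ) (π π' : Finset (ℕ × ℕ × ℕ)) :
    Dw w (vertexTerm π π') =
      (∑ p ∈ π', w (emb p)) + (∑ p ∈ π, w (emb p)) + (π.card : ℤ) * w (1, 1, 1) := by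
  have hT : AddMonoidAlgebra.single ((-1 : ℤ), (-1 : ℤ), (-1 : ℤ)) 1 *
      ((1 - AddMonoidAlgebra.single (1, 0, 0) 1) * (1 - AddMonoidAlgebra.single (0, 1, 0) 1) *
        (1 - AddMonoidAlgebra.single (0, 0, 1) 1)) * Qpoly π' * Qbar π =
      (1 - AddMonoidAlgebra.single ((0:ℤ), (1:ℤ), (0:ℤ)) 1) *
        ((1 - AddMonoidAlgebra.single ((0:ℤ), (0:ℤ), (1:ℤ)) 1) *
          (AddMonoidAlgebra.single ((-1 : ℤ), (-1 : ℤ), (-1 : ℤ)) 1 *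
            (1 - AddMonoidAlgebra.single (1, 0, 0) 1) * Qpoly π' * Qbar π)) := by
    ring
  have he2 : eps (1 - AddMonoidAlgebra.single ((0:ℤ), (1:ℤ), (0:ℤ)) 1) = 0 := by
    rw [map_sub]; simp
  have he3 : eps (1 - AddMonoidAlgebra.single ((0:ℤ), (0:ℤ), (1:ℤ)) 1) = 0 := by
    rw [map_sub]; simp
  have hDT : Dw w ((1 - AddMonoidAlgebra.single ((0:ℤ), (1:ℤ), (0:ℤ)) 1) *
      ((1 - AddMonoidAlgebra.single ((0:ℤ), (0:ℤ), (1:ℤ)) 1) *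
        (AddMonoidAlgebra.single ((-1 : ℤ), (-1 : ℤ), (-1 : ℤ)) 1 *
          (1 - AddMonoidAlgebra.single (1, 0, 0) 1) * Qpoly π' * Qbar π))) = 0 := by
    rw [Dw_mul, eps_mul, he2, he3]; ring
  rw [vertexTerm, map_add, map_sub, hT, hDT, Dw_mul]
  have hneg : ((-1 : ℤ), (-1 : ℤ), (-1 : ℤ)) = -((1 : ℤ), (1 : ℤ), (1 : ℤ)) := by rfl
  rw [Dw_Qpoly, Dw_Qbar, hneg]
  simp [map_neg]
  rw [hneg, map_neg]; ring

lemma eps_eq_sum {f : AddMonoidAlgebra ℤ (ℤ × ℤ × ℤ)} {S : Finset (ℤ × ℤ × ℤ)}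
    (h : f.coeff.support ⊆ S) : eps f = ∑ μ ∈ S, f.coeff μ := by
  rw [eps]
  exact Finsupp.sum_of_support_subset f.coeff h _ (fun _ _ => rfl)

lemma Dw_eq_sum (w : (ℤ × ℤ × ℤ) →+ ℤ) {f : AddMonoidAlgebra ℤ (ℤ × ℤ × ℤ)}
    {S : Finset (ℤ × ℤ × ℤ)} (h : f.coeff.support ⊆ S) :
    Dw w f = ∑ μ ∈ S, f.coeff μ * w μ := by
  rw [Dw]
  exact Finsupp.sum_of_support_subset f.coeff h _ (fun i _ => zero_mul (w i))

lemma Finset_prod_zpow {ι : Type*} (S : Finset ι) {x : ℂ} (hx : x ≠ 0) (f : ι → ℤ) :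
    ∏ i ∈ S, x ^ f i = x ^ (∑ i ∈ S, f i) := by
  classical
  induction S using Finset.induction_on with
  | empty => simp
  | @insert a s ha ih => rw [Finset.prod_insert ha, Finset.sum_insert ha, ih, zpow_add₀ hx]

lemma betaPow_ne_zero (β : Fin 3 → ℂ) (hβ : ∀ i, β i ≠ 0) (μ : ℤ × ℤ × ℤ) :
    betaPow β μ ≠ 0 :=
  mul_ne_zero (mul_ne_zero (zpow_ne_zero _ (hβ 0)) (zpow_ne_zero _ (hβ 1)))
    (zpow_ne_zero _ (hβ 2))

lemma betaPow_mul_neg (β : Fin 3 → ℂ) (hβ : ∀ i, β i ≠ 0) (μ : ℤ × ℤ × ℤ) :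
    betaPow β μ * betaPow β (-μ) = 1 := by
  simp only [betaPow, Prod.fst_neg, Prod.snd_neg, zpow_neg]
  field_simp
  exact div_self (mul_ne_zero (mul_ne_zero (zpow_ne_zero _ (hβ 0))
    (zpow_ne_zero _ (hβ 1))) (zpow_ne_zero _ (hβ 2)))

lemma betaPow_neg_eq (β : Fin 3 → ℂ) (μ : ℤ × ℤ × ℤ) :
    betaPow β (-μ) = β 0 ^ (-μ.1) * β 1 ^ (-μ.2.1) * β 2 ^ (-μ.2.2) := by
  simp [betaPow]

/-- **Lemma 6.3.** Let `π, π'` be plane partitions, `s ≥ 1`, and `β₁, β₂, β₃` nonzero complex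
numbers. Writing `V(π,π') = Σ_μ c_μ t^μ` and `V(π',π) = Σ_μ d_μ t^μ`, the function
`f(L) = Π_μ (L^{s/2}β^μ − L^{−s/2}β^{−μ})^{−c_μ} · Π_μ (L^{−s/2}β^μ − L^{s/2}β^{−μ})^{−d_μ}`
(with `L^{s/2}` the positive real square root of `L^s`) tends to
`(−β₁β₂β₃)^{|π'|−|π|}` as `L → +∞`. -/
theorem limit_of_brackets (π π' : Finset (ℕ × ℕ × ℕ)) (hπ : IsPlanePartition π)
    (hπ' : IsPlanePartition π') (s : ℕ) (hs : 1 ≤ s) (β : Fin 3 → ℂ) (hβ : ∀ i, β i ≠ 0) :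
    Filter.Tendsto
      (fun L : ℝ =>
        (∏ᶠ μ : ℤ × ℤ × ℤ,
            ((Real.sqrt (L ^ s) : ℂ) * betaPow β μ -
              ((Real.sqrt (L ^ s) : ℂ))⁻¹ * betaPow β (-μ)) ^ (-vc π π' μ)) *
        ∏ᶠ μ : ℤ × ℤ × ℤ,
            (((Real.sqrt (L ^ s) : ℂ))⁻¹ * betaPow β μ -
              (Real.sqrt (L ^ s) : ℂ) * betaPow β (-μ)) ^ (-vc π' π μ))
      Filter.atTop
      (nhds ((-(β 0 * β 1 * β 2)) ^ ((π'.card : ℤ) - (π.card : ℤ)))) := by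
  classical
  open Filter in
  set N : ℤ := (π'.card : ℤ) - (π.card : ℤ) with hN
  set S : Finset (ℤ × ℤ × ℤ) := (vertexTerm π π').coeff.support ∪ (vertexTerm π' π).coeff.support
    with hSdef
  have hsub1 : (vertexTerm π π').coeff.support ⊆ S := Finset.subset_union_left
  have hsub2 : (vertexTerm π' π).coeff.support ⊆ S := Finset.subset_union_right
  -- coefficient sums
  have hA1 : ∑ μ ∈ S, vc π π' μ = N := by
    have h := (eps_eq_sum hsub1).symm
    rw [eps_vertexTerm] at h
    exact h
  have hA2 : ∑ μ ∈ S, vc π' π μ = -N := by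
    have h := (eps_eq_sum hsub2).symm
    rw [eps_vertexTerm] at h
    have h' : ∑ μ ∈ S, vc π' π μ = (π.card : ℤ) - π'.card := h
    rw [hN, h']; ring
  -- weighted coefficient sums
  have hWgen : ∀ w : (ℤ × ℤ × ℤ) →+ ℤ, w (1, 1, 1) = 1 →
      (∑ μ ∈ S, vc π' π μ * w μ) - (∑ μ ∈ S, vc π π' μ * w μ) = N := by
    intro w hw
    have h1 : ∑ μ ∈ S, vc π π' μ * w μ = Dw w (vertexTerm π π') := (Dw_eq_sum w hsub1).symm
    have h2 : ∑ μ ∈ S, vc π' π μ * w μ = Dw w (vertexTerm π' π) := (Dw_eq_sum w hsub2).symm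
    rw [h1, h2, Dw_vertexTerm, Dw_vertexTerm, hw, hN]
    ring
  have hW1 : (∑ μ ∈ S, vc π' π μ * μ.1) - (∑ μ ∈ S, vc π π' μ * μ.1) = N :=
    hWgen (AddMonoidHom.fst ℤ (ℤ × ℤ)) rfl
  have hW2 : (∑ μ ∈ S, vc π' π μ * μ.2.1) - (∑ μ ∈ S, vc π π' μ * μ.2.1) = N :=
    hWgen ((AddMonoidHom.fst ℤ ℤ).comp (AddMonoidHom.snd ℤ (ℤ × ℤ))) rfl
  have hW3 : (∑ μ ∈ S, vc π' π μ * μ.2.2) - (∑ μ ∈ S, vc π π' μ * μ.2.2) = N :=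
    hWgen ((AddMonoidHom.snd ℤ ℤ).comp (AddMonoidHom.snd ℤ (ℤ × ℤ))) rfl
  -- analytic preliminaries
  have hRtop : Tendsto (fun L : ℝ => Real.sqrt (L ^ s)) atTop atTop := by
    rw [Filter.tendsto_atTop_atTop]
    intro b
    refine ⟨max 1 (b ^ 2), fun a ha => ?_⟩
    have h1 : (1 : ℝ) ≤ a := le_trans (le_max_left _ _) ha
    have h2 : b ^ 2 ≤ a := le_trans (le_max_right _ _) ha
    have h3 : b ^ 2 ≤ a ^ s := h2.trans (le_self_pow₀ h1 (by omega))
    calc b ≤ |b| := le_abs_self b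
      _ = Real.sqrt (b ^ 2) := (Real.sqrt_sq_eq_abs b).symm
      _ ≤ Real.sqrt (a ^ s) := Real.sqrt_le_sqrt h3
  have hinvR : Tendsto (fun L : ℝ => ((Real.sqrt (L ^ s) : ℝ) : ℂ)⁻¹) atTop (nhds 0) := by
    have h0 : Tendsto (fun L : ℝ => (Real.sqrt (L ^ s))⁻¹) atTop (nhds (0 : ℝ)) :=
      tendsto_inv_atTop_zero.comp hRtop
    have h1 := (Complex.continuous_ofReal.tendsto 0).comp h0
    simpa [Function.comp_def, Complex.ofReal_inv] using h1
  have hfacLim : ∀ c : ℂ, Tendsto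
      (fun L : ℝ => 1 - ((Real.sqrt (L ^ s) : ℝ) : ℂ)⁻¹ * ((Real.sqrt (L ^ s) : ℝ) : ℂ)⁻¹ * c)
      atTop (nhds 1) := by
    intro c
    have h := Filter.Tendsto.const_sub (1 : ℂ) ((hinvR.mul hinvR).mul_const c)
    simpa using h
  set K : ℂ := (-(β 0 * β 1 * β 2)) ^ N with hK
  -- convergence of the correction factors
  have hG1lim : Tendsto (fun L : ℝ => ∏ μ ∈ S,
      (1 - ((Real.sqrt (L ^ s) : ℝ) : ℂ)⁻¹ * ((Real.sqrt (L ^ s) : ℝ) : ℂ)⁻¹ *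
        (betaPow β (-μ) * betaPow β (-μ))) ^ (-vc π π' μ)) atTop (nhds 1) := by
    have h := tendsto_finset_prod (x := atTop (α := ℝ))
      (f := fun (μ : ℤ × ℤ × ℤ) (L : ℝ) =>
        (1 - ((Real.sqrt (L ^ s) : ℝ) : ℂ)⁻¹ * ((Real.sqrt (L ^ s) : ℝ) : ℂ)⁻¹ *
          (betaPow β (-μ) * betaPow β (-μ))) ^ (-vc π π' μ))
      (a := fun _ => (1 : ℂ)) S
      (fun μ _ => by
        simpa using (hfacLim (betaPow β (-μ) * betaPow β (-μ))).zpow₀ (-vc π π' μ)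
          (Or.inl one_ne_zero))
    simpa using h
  have hG2lim : Tendsto (fun L : ℝ => ∏ μ ∈ S,
      (1 - ((Real.sqrt (L ^ s) : ℝ) : ℂ)⁻¹ * ((Real.sqrt (L ^ s) : ℝ) : ℂ)⁻¹ *
        (betaPow β μ * betaPow β μ)) ^ (-vc π' π μ)) atTop (nhds 1) := by
    have h := tendsto_finset_prod (x := atTop (α := ℝ))
      (f := fun (μ : ℤ × ℤ × ℤ) (L : ℝ) =>
        (1 - ((Real.sqrt (L ^ s) : ℝ) : ℂ)⁻¹ * ((Real.sqrt (L ^ s) : ℝ) : ℂ)⁻¹ *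
          (betaPow β μ * betaPow β μ)) ^ (-vc π' π μ))
      (a := fun _ => (1 : ℂ)) S
      (fun μ _ => by
        simpa using (hfacLim (betaPow β μ * betaPow β μ)).zpow₀ (-vc π' π μ)
          (Or.inl one_ne_zero))
    simpa using h
  have hMain : Tendsto (fun L : ℝ => K *
      ((∏ μ ∈ S, (1 - ((Real.sqrt (L ^ s) : ℝ) : ℂ)⁻¹ * ((Real.sqrt (L ^ s) : ℝ) : ℂ)⁻¹ *
          (betaPow β (-μ) * betaPow β (-μ))) ^ (-vc π π' μ)) *
       (∏ μ ∈ S, (1 - ((Real.sqrt (L ^ s) : ℝ) : ℂ)⁻¹ * ((Real.sqrt (L ^ s) : ℝ) : ℂ)⁻¹ *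
          (betaPow β μ * betaPow β μ)) ^ (-vc π' π μ)))) atTop (nhds K) := by
    have h := Filter.Tendsto.const_mul K (hG1lim.mul hG2lim)
    simpa using h
  refine Filter.Tendsto.congr' ?_ hMain
  -- the eventual identity
  filter_upwards [Filter.eventually_ge_atTop (1 : ℝ)] with L hL
  have hr1 : (1 : ℝ) ≤ Real.sqrt (L ^ s) := by
    rw [show (1 : ℝ) = Real.sqrt 1 from (Real.sqrt_one).symm]
    exact Real.sqrt_le_sqrt (hL.trans (le_self_pow₀ hL (by omega)))
  set r : ℂ := ((Real.sqrt (L ^ s) : ℝ) : ℂ) with hrdef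
  have hr : r ≠ 0 := by
    rw [hrdef]
    exact_mod_cast ne_of_gt (lt_of_lt_of_le zero_lt_one hr1)
  -- replace the finprods by finite products over S
  have e1 : (∏ᶠ μ : ℤ × ℤ × ℤ,
        (r * betaPow β μ - r⁻¹ * betaPow β (-μ)) ^ (-vc π π' μ))
      = ∏ μ ∈ S, (r * betaPow β μ - r⁻¹ * betaPow β (-μ)) ^ (-vc π π' μ) := by
    apply finprod_eq_prod_of_mulSupport_subset
    intro μ hμ
    apply hsub1
    rw [Finsupp.mem_support_iff]
    intro h0
    apply hμ
    have h0' : vc π π' μ = 0 := h0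
    simp [h0']
  have e2 : (∏ᶠ μ : ℤ × ℤ × ℤ,
        (r⁻¹ * betaPow β μ - r * betaPow β (-μ)) ^ (-vc π' π μ))
      = ∏ μ ∈ S, (r⁻¹ * betaPow β μ - r * betaPow β (-μ)) ^ (-vc π' π μ) := by
    apply finprod_eq_prod_of_mulSupport_subset
    intro μ hμ
    apply hsub2
    rw [Finsupp.mem_support_iff]
    intro h0
    apply hμ
    have h0' : vc π' π μ = 0 := h0
    simp [h0']
  -- factorizations of the brackets
  have hb1 : ∀ μ : ℤ × ℤ × ℤ, r * betaPow β μ - r⁻¹ * betaPow β (-μ)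
      = (r * betaPow β μ) *
        (1 - r⁻¹ * r⁻¹ * (betaPow β (-μ) * betaPow β (-μ))) := by
    intro μ
    have hbm := betaPow_mul_neg β hβ μ
    have h1 : r * betaPow β μ * (r⁻¹ * r⁻¹ * (betaPow β (-μ) * betaPow β (-μ)))
        = (r * r⁻¹) * ((betaPow β μ * betaPow β (-μ)) * (r⁻¹ * betaPow β (-μ))) := by ring
    rw [mul_sub, mul_one, h1, mul_inv_cancel₀ hr, hbm, one_mul, one_mul]
  have hb2 : ∀ μ : ℤ × ℤ × ℤ, r⁻¹ * betaPow β μ - r * betaPow β (-μ)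
      = ((-1 : ℂ) * r * betaPow β (-μ)) *
        (1 - r⁻¹ * r⁻¹ * (betaPow β μ * betaPow β μ)) := by
    intro μ
    have hbm := betaPow_mul_neg β hβ μ
    have h1 : (-1 : ℂ) * r * betaPow β (-μ) * (r⁻¹ * r⁻¹ * (betaPow β μ * betaPow β μ))
        = -((r * r⁻¹) * ((betaPow β μ * betaPow β (-μ)) * (r⁻¹ * betaPow β μ))) := by ring
    rw [mul_sub, mul_one, h1, mul_inv_cancel₀ hr, hbm, one_mul, one_mul]
    ring
  -- factor each term of the first product
  have hfac1 : ∀ μ ∈ S, (r * betaPow β μ - r⁻¹ * betaPow β (-μ)) ^ (-vc π π' μ)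
      = (r ^ (-vc π π' μ) *
          (β 0 ^ (-(vc π π' μ * μ.1)) * β 1 ^ (-(vc π π' μ * μ.2.1)) *
            β 2 ^ (-(vc π π' μ * μ.2.2)))) *
        (1 - r⁻¹ * r⁻¹ * (betaPow β (-μ) * betaPow β (-μ))) ^ (-vc π π' μ) := by
    intro μ _
    rw [hb1 μ,
      show -(vc π π' μ * μ.1) = μ.1 * (-vc π π' μ) from by ring,
      show -(vc π π' μ * μ.2.1) = μ.2.1 * (-vc π π' μ) from by ring,
      show -(vc π π' μ * μ.2.2) = μ.2.2 * (-vc π π' μ) from by ring,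
      zpow_mul, zpow_mul, zpow_mul, ← mul_zpow, ← mul_zpow, ← mul_zpow, ← mul_zpow]
    rfl
  have hfac2 : ∀ μ ∈ S, (r⁻¹ * betaPow β μ - r * betaPow β (-μ)) ^ (-vc π' π μ)
      = ((-1 : ℂ) ^ (-vc π' π μ) * r ^ (-vc π' π μ) *
          (β 0 ^ (vc π' π μ * μ.1) * β 1 ^ (vc π' π μ * μ.2.1) *
            β 2 ^ (vc π' π μ * μ.2.2))) *
        (1 - r⁻¹ * r⁻¹ * (betaPow β μ * betaPow β μ)) ^ (-vc π' π μ) := by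
    intro μ _
    rw [hb2 μ, betaPow_neg_eq,
      show vc π' π μ * μ.1 = (-μ.1) * (-vc π' π μ) from by ring,
      show vc π' π μ * μ.2.1 = (-μ.2.1) * (-vc π' π μ) from by ring,
      show vc π' π μ * μ.2.2 = (-μ.2.2) * (-vc π' π μ) from by ring,
      zpow_mul, zpow_mul, zpow_mul,
      ← mul_zpow, ← mul_zpow, ← mul_zpow, ← mul_zpow, ← mul_zpow]
  -- products in factored form
  have P1 : ∏ μ ∈ S, (r * betaPow β μ - r⁻¹ * betaPow β (-μ)) ^ (-vc π π' μ)
      = (r ^ (-N) * (β 0 ^ (∑ μ ∈ S, -(vc π π' μ * μ.1)) *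
          β 1 ^ (∑ μ ∈ S, -(vc π π' μ * μ.2.1)) * β 2 ^ (∑ μ ∈ S, -(vc π π' μ * μ.2.2)))) *
        ∏ μ ∈ S, (1 - r⁻¹ * r⁻¹ * (betaPow β (-μ) * betaPow β (-μ))) ^ (-vc π π' μ) := by
    rw [Finset.prod_congr rfl hfac1, Finset.prod_mul_distrib, Finset.prod_mul_distrib,
      Finset.prod_mul_distrib, Finset.prod_mul_distrib,
      Finset_prod_zpow S hr, Finset_prod_zpow S (hβ 0), Finset_prod_zpow S (hβ 1),
      Finset_prod_zpow S (hβ 2),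
      show (∑ μ ∈ S, -vc π π' μ) = -N from by rw [Finset.sum_neg_distrib, hA1]]
  have P2 : ∏ μ ∈ S, (r⁻¹ * betaPow β μ - r * betaPow β (-μ)) ^ (-vc π' π μ)
      = ((-1 : ℂ) ^ N * r ^ N * (β 0 ^ (∑ μ ∈ S, vc π' π μ * μ.1) *
          β 1 ^ (∑ μ ∈ S, vc π' π μ * μ.2.1) * β 2 ^ (∑ μ ∈ S, vc π' π μ * μ.2.2))) *
        ∏ μ ∈ S, (1 - r⁻¹ * r⁻¹ * (betaPow β μ * betaPow β μ)) ^ (-vc π' π μ) := by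
    rw [Finset.prod_congr rfl hfac2, Finset.prod_mul_distrib, Finset.prod_mul_distrib,
      Finset.prod_mul_distrib, Finset.prod_mul_distrib, Finset.prod_mul_distrib,
      Finset_prod_zpow S (neg_ne_zero.mpr one_ne_zero), Finset_prod_zpow S hr,
      Finset_prod_zpow S (hβ 0), Finset_prod_zpow S (hβ 1), Finset_prod_zpow S (hβ 2),
      show (∑ μ ∈ S, -vc π' π μ) = N from by rw [Finset.sum_neg_distrib, hA2]; ring]
  -- combine
  rw [e1, e2, P1, P2]
  have h_r : r ^ (-N) * r ^ N = 1 := by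
    rw [← zpow_add₀ hr, neg_add_cancel, zpow_zero]
  have h_b0 : β 0 ^ (∑ μ ∈ S, -(vc π π' μ * μ.1)) * β 0 ^ (∑ μ ∈ S, vc π' π μ * μ.1)
      = β 0 ^ N := by
    rw [← zpow_add₀ (hβ 0)]
    congr 1
    rw [Finset.sum_neg_distrib]
    linarith [hW1]
  have h_b1 : β 1 ^ (∑ μ ∈ S, -(vc π π' μ * μ.2.1)) * β 1 ^ (∑ μ ∈ S, vc π' π μ * μ.2.1)
      = β 1 ^ N := by
    rw [← zpow_add₀ (hβ 1)]
    congr 1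
    rw [Finset.sum_neg_distrib]
    linarith [hW2]
  have h_b2 : β 2 ^ (∑ μ ∈ S, -(vc π π' μ * μ.2.2)) * β 2 ^ (∑ μ ∈ S, vc π' π μ * μ.2.2)
      = β 2 ^ N := by
    rw [← zpow_add₀ (hβ 2)]
    congr 1
    rw [Finset.sum_neg_distrib]
    linarith [hW3]
  have hKsplit : K = (-1 : ℂ) ^ N * (β 0 ^ N * (β 1 ^ N * β 2 ^ N)) := by
    rw [hK, show -(β 0 * β 1 * β 2) = (-1 : ℂ) * β 0 * β 1 * β 2 from by ring,
      mul_zpow, mul_zpow, mul_zpow]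
    ring
  rw [hKsplit]
  calc (-1 : ℂ) ^ N * (β 0 ^ N * (β 1 ^ N * β 2 ^ N)) *
        ((∏ μ ∈ S, (1 - r⁻¹ * r⁻¹ * (betaPow β (-μ) * betaPow β (-μ))) ^ (-vc π π' μ)) *
         (∏ μ ∈ S, (1 - r⁻¹ * r⁻¹ * (betaPow β μ * betaPow β μ)) ^ (-vc π' π μ)))
      = (r ^ (-N) * r ^ N) *
        ((β 0 ^ (∑ μ ∈ S, -(vc π π' μ * μ.1)) * β 0 ^ (∑ μ ∈ S, vc π' π μ * μ.1)) *
         ((β 1 ^ (∑ μ ∈ S, -(vc π π' μ * μ.2.1)) * β 1 ^ (∑ μ ∈ S, vc π' π μ * μ.2.1)) *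
          ((β 2 ^ (∑ μ ∈ S, -(vc π π' μ * μ.2.2)) * β 2 ^ (∑ μ ∈ S, vc π' π μ * μ.2.2)) *
           ((-1 : ℂ) ^ N *
            ((∏ μ ∈ S, (1 - r⁻¹ * r⁻¹ * (betaPow β (-μ) * betaPow β (-μ))) ^ (-vc π π' μ)) *
             (∏ μ ∈ S, (1 - r⁻¹ * r⁻¹ * (betaPow β μ * betaPow β μ)) ^ (-vc π' π μ))))))) := by
        rw [h_r, h_b0, h_b1, h_b2]; ring
    _ = (r ^ (-N) * (β 0 ^ (∑ μ ∈ S, -(vc π π' μ * μ.1)) *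
          β 1 ^ (∑ μ ∈ S, -(vc π π' μ * μ.2.1)) * β 2 ^ (∑ μ ∈ S, -(vc π π' μ * μ.2.2)))) *
        (∏ μ ∈ S, (1 - r⁻¹ * r⁻¹ * (betaPow β (-μ) * betaPow β (-μ))) ^ (-vc π π' μ)) *
        (((-1 : ℂ) ^ N * r ^ N * (β 0 ^ (∑ μ ∈ S, vc π' π μ * μ.1) *
          β 1 ^ (∑ μ ∈ S, vc π' π μ * μ.2.1) * β 2 ^ (∑ μ ∈ S, vc π' π μ * μ.2.2))) *
        ∏ μ ∈ S, (1 - r⁻¹ * r⁻¹ * (betaPow β μ * betaPow β μ)) ^ (-vc π' π μ)) := by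
        ring
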